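/- Let G be a combinatorial Gauss diagram. If G can be transformed into a parallel Gauss diagram by a finite sequence of m moves, each of which is either an arc-shift move or a sign-flip move, then 2m ≥ |J(G)|. In particular, the minimum number of such moves needed to transform G into a parallel Gauss diagram is at least |J(G)|/2 (the Gauss-diagram form of the bound A(K) ≥ |J(K)|/2 on the arc shift number). -/
import Mathlib


open scoped Classical

/-- The cyclically next position on a circle of `m` marked points. -/
def nextPos {m : ℕ} (p : Fin m) : Fin m :=
  ⟨(p.val + 1) % m, Nat.mod_lt _ p.pos⟩

/-- `Inside a b x` : the point `x` lies strictly inside the cyclic interval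
running from `a` (forward) to `b`. -/
def Inside {m : ℕ} (a b x : Fin m) : Prop :=
  0 < (x - a).val ∧ (x - a).val < (b - a).val

/-- A combinatorial Gauss diagram with `n` chords: a bijection assigning to each
chord its two endpoints among `2 * n` cyclically ordered points, together with a
sign function taking values in `{-1, 1}`. -/
structure GaussDiagram (n : ℕ) where
  endpoint : Fin n × Bool ≃ Fin (2 * n)
  sign : Fin n → ℤ
  sign_pm : ∀ c, sign c = 1 ∨ sign c = -1

/-- Two chords are interlinked if exactly one endpoint of `d` lies strictly inside
the cyclic interval from `endpoint (c, false)` to `endpoint (c, true)`. -/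
def Interlinked {n : ℕ} (G : GaussDiagram n) (c d : Fin n) : Prop :=
  Xor'
    (Inside (G.endpoint (c, false)) (G.endpoint (c, true)) (G.endpoint (d, false)))
    (Inside (G.endpoint (c, false)) (G.endpoint (c, true)) (G.endpoint (d, true)))

/-- A chord is odd if it is interlinked with an odd number of other chords. -/
def OddChord {n : ℕ} (G : GaussDiagram n) (c : Fin n) : Prop :=
  Odd ((Finset.univ.filter fun d => d ≠ c ∧ Interlinked G c d).card)

/-- The odd writhe: the sum of the signs of the odd chords. -/
noncomputable def oddWrithe {n : ℕ} (G : GaussDiagram n) : ℤ :=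
  ∑ c ∈ Finset.univ.filter (fun c => OddChord G c), G.sign c

/-- `AdjSwap G G' p c d` : `G'` is obtained from `G` by the adjacent endpoint swap at
the cyclically adjacent positions `p`, `p+1`, which are occupied by endpoints of the
two distinct chords `c` and `d`; all signs are unchanged. -/
def AdjSwap {n : ℕ} (G G' : GaussDiagram n) (p : Fin (2 * n)) (c d : Fin n) : Prop :=
  c ≠ d ∧ (G.endpoint.symm p).1 = c ∧ (G.endpoint.symm (nextPos p)).1 = d ∧
    G'.endpoint = G.endpoint.trans (Equiv.swap p (nextPos p)) ∧
    G'.sign = G.sign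

/-- `ArcShift G G' p c d` : `G'` is obtained from `G` by the arc-shift move at the
cyclically adjacent positions `p`, `p+1`, occupied by endpoints of the two distinct
chords `c` and `d`: the two endpoints are exchanged and the signs of `c` and `d`
are negated. -/
def ArcShift {n : ℕ} (G G' : GaussDiagram n) (p : Fin (2 * n)) (c d : Fin n) : Prop :=
  c ≠ d ∧ (G.endpoint.symm p).1 = c ∧ (G.endpoint.symm (nextPos p)).1 = d ∧
    G'.endpoint = G.endpoint.trans (Equiv.swap p (nextPos p)) ∧
    G'.sign = fun e => if e = c ∨ e = d then -G.sign e else G.sign e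

/-- `SignFlip G G' c` : `G'` is obtained from `G` by negating the sign of the chord `c`,
changing nothing else. -/
def SignFlip {n : ℕ} (G G' : GaussDiagram n) (c : Fin n) : Prop :=
  G'.endpoint = G.endpoint ∧ G'.sign = Function.update G.sign c (-G.sign c)

/-- An arc-shift move between Gauss diagrams (at some position, on some pair of chords). -/
def ArcShiftMove {n : ℕ} (G G' : GaussDiagram n) : Prop :=
  ∃ p c d, ArcShift G G' p c d

/-- A sign-flip move between Gauss diagrams (at some chord). -/
def SignFlipMove {n : ℕ} (G G' : GaussDiagram n) : Prop :=
  ∃ c, SignFlip G G' c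

/-- A move is either an arc-shift move or a sign-flip move. -/
def Move {n : ℕ} (G G' : GaussDiagram n) : Prop :=
  ArcShiftMove G G' ∨ SignFlipMove G G'

/-- A Gauss diagram is parallel if no two of its chords are interlinked. -/
def Parallel {n : ℕ} (G : GaussDiagram n) : Prop :=
  ∀ c d : Fin n, c ≠ d → ¬ Interlinked G c d

lemma subVal {m : ℕ} (a x : Fin m) :
    (x - a).val = if a.val ≤ x.val then x.val - a.val else x.val + m - a.val := by
  have hx := x.isLt
  have ha := a.isLt
  simp only [Fin.sub_def]
  split
  · next h =>
    have hrw : m - a.val + x.val = (x.val - a.val) + m := by omega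
    rw [hrw, Nat.add_mod_right, Nat.mod_eq_of_lt (by omega)]
  · next h => rw [Nat.mod_eq_of_lt (by omega)]; omega

lemma nextVal {m : ℕ} {p q : Fin m} (hq : q = nextPos p) :
    q.val = p.val + 1 ∨ (p.val + 1 = m ∧ q.val = 0) := by
  subst hq
  have h0 : (nextPos p).val = (p.val + 1) % m := rfl
  rcases Nat.lt_or_ge (p.val + 1) m with h | h
  · left; rw [h0]; exact Nat.mod_eq_of_lt h
  · right
    have h2 : p.val + 1 = m := by have := p.isLt; omega
    exact ⟨h2, by rw [h0, h2, Nat.mod_self]⟩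

section B
variable {m : ℕ} {p q a b x : Fin m}

lemma B1 (hq : q = nextPos p) (h1 : a ≠ p) (h2 : a ≠ q) (h3 : b ≠ p) (h4 : b ≠ q) :
    Inside a b p ↔ Inside a b q := by
  have hv := nextVal hq
  have l1 := p.isLt; have l2 := q.isLt; have l3 := a.isLt; have l4 := b.isLt
  have n1 : a.val ≠ p.val := fun h => h1 (Fin.ext h)
  have n2 : a.val ≠ q.val := fun h => h2 (Fin.ext h)
  have n3 : b.val ≠ p.val := fun h => h3 (Fin.ext h)
  have n4 : b.val ≠ q.val := fun h => h4 (Fin.ext h)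
  simp only [Inside, subVal]
  split_ifs <;> omega

lemma B2 (hq : q = nextPos p) (h3 : b ≠ p) (h4 : b ≠ q) (h5 : x ≠ p) (h6 : x ≠ q) :
    Inside p b x ↔ Inside q b x := by
  have hv := nextVal hq
  have l1 := p.isLt; have l2 := q.isLt; have l4 := b.isLt; have l5 := x.isLt
  have n3 : b.val ≠ p.val := fun h => h3 (Fin.ext h)
  have n4 : b.val ≠ q.val := fun h => h4 (Fin.ext h)
  have n5 : x.val ≠ p.val := fun h => h5 (Fin.ext h)
  have n6 : x.val ≠ q.val := fun h => h6 (Fin.ext h)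
  simp only [Inside, subVal]
  split_ifs <;> omega

lemma B3 (hq : q = nextPos p) (h1 : a ≠ p) (h2 : a ≠ q) (h5 : x ≠ p) (h6 : x ≠ q) :
    Inside a p x ↔ Inside a q x := by
  have hv := nextVal hq
  have l1 := p.isLt; have l2 := q.isLt; have l3 := a.isLt; have l5 := x.isLt
  have n1 : a.val ≠ p.val := fun h => h1 (Fin.ext h)
  have n2 : a.val ≠ q.val := fun h => h2 (Fin.ext h)
  have n5 : x.val ≠ p.val := fun h => h5 (Fin.ext h)
  have n6 : x.val ≠ q.val := fun h => h6 (Fin.ext h)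
  simp only [Inside, subVal]
  split_ifs <;> omega

lemma B4 (hq : q = nextPos p) (h3 : b ≠ p) (h4 : b ≠ q) :
    Inside p b q := by
  have hv := nextVal hq
  have l1 := p.isLt; have l2 := q.isLt; have l4 := b.isLt
  have n3 : b.val ≠ p.val := fun h => h3 (Fin.ext h)
  have n4 : b.val ≠ q.val := fun h => h4 (Fin.ext h)
  simp only [Inside, subVal]
  split_ifs <;> omega

lemma B5 (hq : q = nextPos p) (h3 : b ≠ p) (h4 : b ≠ q) :
    ¬ Inside q b p := by
  have hv := nextVal hq
  have l1 := p.isLt; have l2 := q.isLt; have l4 := b.isLt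
  have n3 : b.val ≠ p.val := fun h => h3 (Fin.ext h)
  have n4 : b.val ≠ q.val := fun h => h4 (Fin.ext h)
  simp only [Inside, subVal]
  split_ifs <;> omega

lemma B6 (hq : q = nextPos p) (h1 : a ≠ p) (h2 : a ≠ q) :
    ¬ Inside a p q := by
  have hv := nextVal hq
  have l1 := p.isLt; have l2 := q.isLt; have l3 := a.isLt
  have n1 : a.val ≠ p.val := fun h => h1 (Fin.ext h)
  have n2 : a.val ≠ q.val := fun h => h2 (Fin.ext h)
  simp only [Inside, subVal]
  split_ifs <;> omega

lemma B7 (hq : q = nextPos p) (h1 : a ≠ p) (h2 : a ≠ q) :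
    Inside a q p := by
  have hv := nextVal hq
  have l1 := p.isLt; have l2 := q.isLt; have l3 := a.isLt
  have n1 : a.val ≠ p.val := fun h => h1 (Fin.ext h)
  have n2 : a.val ≠ q.val := fun h => h2 (Fin.ext h)
  simp only [Inside, subVal]
  split_ifs <;> omega

end B

lemma myXorNotLeft {A B : Prop} : Xor' (¬A) B ↔ ¬ Xor' A B := by
  by_cases A <;> by_cases B <;> simp [Xor', *]

lemma myXorNotRight {A B : Prop} : Xor' A (¬B) ↔ ¬ Xor' A B := by
  by_cases A <;> by_cases B <;> simp [Xor', *]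

lemma odd_toggle {α : Type*} [Fintype α] (P Q : α → Prop) [DecidablePred P] [DecidablePred Q] (d : α)
    (h : ∀ f, f ≠ d → (P f ↔ Q f)) (hd : P d ↔ ¬ Q d) :
    (Odd (Finset.univ.filter P).card ↔ ¬ Odd (Finset.univ.filter Q).card) := by
  classical
  rw [Finset.card_filter, Finset.card_filter,
      ← Finset.sum_erase_add _ _ (Finset.mem_univ d),
      ← Finset.sum_erase_add _ _ (Finset.mem_univ d)]
  have hsum : (∑ x ∈ Finset.univ.erase d, if P x then 1 else 0)
      = ∑ x ∈ Finset.univ.erase d, if Q x then 1 else 0 :=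
    Finset.sum_congr rfl fun x hx => by
      have := h x (Finset.ne_of_mem_erase hx)
      simp [this]
  rw [hsum]
  by_cases hQd : Q d
  · have hPd : ¬ P d := fun hP => (hd.mp hP) hQd
    rw [if_pos hQd, if_neg hPd, Nat.odd_iff, Nat.odd_iff]
    omega
  · have hPd : P d := hd.mpr hQd
    rw [if_neg hQd, if_pos hPd, Nat.odd_iff, Nat.odd_iff]
    omega

noncomputable def chordVal {n : ℕ} (G : GaussDiagram n) (c : Fin n) : ℤ :=
  if OddChord G c then G.sign c else 0

lemma oddWrithe_eq {n : ℕ} (G : GaussDiagram n) : oddWrithe G = ∑ c, chordVal G c := by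
  rw [oddWrithe, Finset.sum_filter]
  rfl

lemma arcshift_key {n : ℕ} {G G' : GaussDiagram n} (h : ArcShiftMove G G') :
    |oddWrithe G - oddWrithe G'| ≤ 2 := by
  obtain ⟨p, c, d, hcd, hc, hd, hE, hs⟩ := h
  obtain ⟨β, hpβ⟩ : ∃ β, G.endpoint (c, β) = p :=
    ⟨(G.endpoint.symm p).2, by rw [← hc]; exact G.endpoint.apply_symm_apply p⟩
  obtain ⟨γ, hqγ⟩ : ∃ γ, G.endpoint (d, γ) = nextPos p :=
    ⟨(G.endpoint.symm (nextPos p)).2, by rw [← hd]; exact G.endpoint.apply_symm_apply _⟩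
  have hPiff : ∀ z : Fin n × Bool, G.endpoint z = p ↔ z = (c, β) := fun z => by
    rw [← hpβ, Equiv.apply_eq_iff_eq]
  have hQiff : ∀ z : Fin n × Bool, G.endpoint z = nextPos p ↔ z = (d, γ) := fun z => by
    rw [← hqγ, Equiv.apply_eq_iff_eq]
  have hnp : ∀ (e : Fin n) (bb : Bool), ¬(e = c ∧ bb = β) → G.endpoint (e, bb) ≠ p := by
    intro e bb hne hEq
    have h2 := (hPiff _).mp hEq
    rw [Prod.mk.injEq] at h2
    exact hne h2
  have hnq : ∀ (e : Fin n) (bb : Bool), ¬(e = d ∧ bb = γ) → G.endpoint (e, bb) ≠ nextPos p := by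
    intro e bb hne hEq
    have h2 := (hQiff _).mp hEq
    rw [Prod.mk.injEq] at h2
    exact hne h2
  have hE' : ∀ z : Fin n × Bool, G'.endpoint z = Equiv.swap p (nextPos p) (G.endpoint z) := by
    intro z; rw [hE]; rfl
  have hfix : ∀ (e : Fin n) (bb : Bool), e ≠ c → e ≠ d →
      G'.endpoint (e, bb) = G.endpoint (e, bb) := by
    intro e bb h1 h2
    rw [hE']
    exact Equiv.swap_apply_of_ne_of_ne (hnp e bb (fun hh => h1 hh.1)) (hnq e bb (fun hh => h2 hh.1))
  -- Inside-level helpers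
  have H_c : ∀ X : Fin (2*n), X ≠ p → X ≠ nextPos p →
      (Inside (G'.endpoint (c, false)) (G'.endpoint (c, true)) X ↔
       Inside (G.endpoint (c, false)) (G.endpoint (c, true)) X) := by
    intro X hX1 hX2
    rw [hE' (c, false), hE' (c, true)]
    cases β with
    | false =>
      have a1 := hnp c true (by simp)
      have a2 := hnq c true (fun hh => hcd hh.1)
      rw [hpβ, Equiv.swap_apply_left, Equiv.swap_apply_of_ne_of_ne a1 a2]
      exact (B2 rfl a1 a2 hX1 hX2).symm
    | true =>
      have a1 := hnp c false (by simp)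
      have a2 := hnq c false (fun hh => hcd hh.1)
      rw [hpβ, Equiv.swap_apply_left, Equiv.swap_apply_of_ne_of_ne a1 a2]
      exact (B3 rfl a1 a2 hX1 hX2).symm
  have H_d : ∀ X : Fin (2*n), X ≠ p → X ≠ nextPos p →
      (Inside (G'.endpoint (d, false)) (G'.endpoint (d, true)) X ↔
       Inside (G.endpoint (d, false)) (G.endpoint (d, true)) X) := by
    intro X hX1 hX2
    rw [hE' (d, false), hE' (d, true)]
    cases γ with
    | false =>
      have a1 := hnp d true (fun hh => hcd hh.1.symm)
      have a2 := hnq d true (by simp)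
      rw [hqγ, Equiv.swap_apply_right, Equiv.swap_apply_of_ne_of_ne a1 a2]
      exact B2 rfl a1 a2 hX1 hX2
    | true =>
      have a1 := hnp d false (fun hh => hcd hh.1.symm)
      have a2 := hnq d false (by simp)
      rw [hqγ, Equiv.swap_apply_right, Equiv.swap_apply_of_ne_of_ne a1 a2]
      exact B3 rfl a1 a2 hX1 hX2
  have H_x : ∀ (A B : Fin (2*n)), A ≠ p → A ≠ nextPos p → B ≠ p → B ≠ nextPos p →
      ∀ bb, (Inside A B (G'.endpoint (c, bb)) ↔ Inside A B (G.endpoint (c, bb))) := by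
    intro A B h1 h2 h3 h4 bb
    rw [hE' (c, bb)]
    by_cases hbb : bb = β
    · subst hbb
      rw [hpβ, Equiv.swap_apply_left]
      exact (B1 rfl h1 h2 h3 h4).symm
    · rw [Equiv.swap_apply_of_ne_of_ne (hnp c bb (fun hh => hbb hh.2)) (hnq c bb (fun hh => hcd hh.1))]
  have H_xd : ∀ (A B : Fin (2*n)), A ≠ p → A ≠ nextPos p → B ≠ p → B ≠ nextPos p →
      ∀ bb, (Inside A B (G'.endpoint (d, bb)) ↔ Inside A B (G.endpoint (d, bb))) := by
    intro A B h1 h2 h3 h4 bb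
    rw [hE' (d, bb)]
    by_cases hbb : bb = γ
    · subst hbb
      rw [hqγ, Equiv.swap_apply_right]
      exact B1 rfl h1 h2 h3 h4
    · rw [Equiv.swap_apply_of_ne_of_ne (hnp d bb (fun hh => hcd hh.1.symm)) (hnq d bb (fun hh => hbb hh.2))]
  have H_cq : Inside (G'.endpoint (c, false)) (G'.endpoint (c, true)) p ↔
      ¬ Inside (G.endpoint (c, false)) (G.endpoint (c, true)) (nextPos p) := by
    rw [hE' (c, false), hE' (c, true)]
    cases β with
    | false =>
      have a1 := hnp c true (by simp)
      have a2 := hnq c true (fun hh => hcd hh.1)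
      rw [hpβ, Equiv.swap_apply_left, Equiv.swap_apply_of_ne_of_ne a1 a2]
      exact iff_of_false (B5 rfl a1 a2) (not_not_intro (B4 rfl a1 a2))
    | true =>
      have a1 := hnp c false (by simp)
      have a2 := hnq c false (fun hh => hcd hh.1)
      rw [hpβ, Equiv.swap_apply_left, Equiv.swap_apply_of_ne_of_ne a1 a2]
      exact iff_of_true (B7 rfl a1 a2) (B6 rfl a1 a2)
  have H_dp : Inside (G'.endpoint (d, false)) (G'.endpoint (d, true)) (nextPos p) ↔
      ¬ Inside (G.endpoint (d, false)) (G.endpoint (d, true)) p := by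
    rw [hE' (d, false), hE' (d, true)]
    cases γ with
    | false =>
      have a1 := hnp d true (fun hh => hcd hh.1.symm)
      have a2 := hnq d true (by simp)
      rw [hqγ, Equiv.swap_apply_right, Equiv.swap_apply_of_ne_of_ne a1 a2]
      exact iff_of_true (B4 rfl a1 a2) (B5 rfl a1 a2)
    | true =>
      have a1 := hnp d false (fun hh => hcd hh.1.symm)
      have a2 := hnq d false (by simp)
      rw [hqγ, Equiv.swap_apply_right, Equiv.swap_apply_of_ne_of_ne a1 a2]
      exact iff_of_false (B6 rfl a1 a2) (not_not_intro (B7 rfl a1 a2))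
  -- Interlinked-level
  have IL_ff : ∀ e f, e ≠ c → e ≠ d → f ≠ c → f ≠ d →
      (Interlinked G' e f ↔ Interlinked G e f) := by
    intro e f h1 h2 h3 h4
    unfold Interlinked
    rw [hfix e false h1 h2, hfix e true h1 h2, hfix f false h3 h4, hfix f true h3 h4]
  have IL_ec : ∀ e, e ≠ c → e ≠ d → (Interlinked G' e c ↔ Interlinked G e c) := by
    intro e h1 h2
    have a1 := hnp e false (fun hh => h1 hh.1)
    have a2 := hnq e false (fun hh => h2 hh.1)
    have a3 := hnp e true (fun hh => h1 hh.1)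
    have a4 := hnq e true (fun hh => h2 hh.1)
    unfold Interlinked
    rw [hfix e false h1 h2, hfix e true h1 h2, H_x _ _ a1 a2 a3 a4 false, H_x _ _ a1 a2 a3 a4 true]
  have IL_ed : ∀ e, e ≠ c → e ≠ d → (Interlinked G' e d ↔ Interlinked G e d) := by
    intro e h1 h2
    have a1 := hnp e false (fun hh => h1 hh.1)
    have a2 := hnq e false (fun hh => h2 hh.1)
    have a3 := hnp e true (fun hh => h1 hh.1)
    have a4 := hnq e true (fun hh => h2 hh.1)
    unfold Interlinked
    rw [hfix e false h1 h2, hfix e true h1 h2, H_xd _ _ a1 a2 a3 a4 false, H_xd _ _ a1 a2 a3 a4 true]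
  have IL_ce : ∀ f, f ≠ c → f ≠ d → (Interlinked G' c f ↔ Interlinked G c f) := by
    intro f h3 h4
    have a1 := hnp f false (fun hh => h3 hh.1)
    have a2 := hnq f false (fun hh => h4 hh.1)
    have a3 := hnp f true (fun hh => h3 hh.1)
    have a4 := hnq f true (fun hh => h4 hh.1)
    unfold Interlinked
    rw [hfix f false h3 h4, hfix f true h3 h4, H_c _ a1 a2, H_c _ a3 a4]
  have IL_de : ∀ f, f ≠ c → f ≠ d → (Interlinked G' d f ↔ Interlinked G d f) := by
    intro f h3 h4
    have a1 := hnp f false (fun hh => h3 hh.1)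
    have a2 := hnq f false (fun hh => h4 hh.1)
    have a3 := hnp f true (fun hh => h3 hh.1)
    have a4 := hnq f true (fun hh => h4 hh.1)
    unfold Interlinked
    rw [hfix f false h3 h4, hfix f true h3 h4, H_d _ a1 a2, H_d _ a3 a4]
  have IL_cd : Interlinked G' c d ↔ ¬ Interlinked G c d := by
    unfold Interlinked
    cases γ with
    | false =>
      have a1 := hnp d true (fun hh => hcd hh.1.symm)
      have a2 := hnq d true (by simp)
      have e1 : G'.endpoint (d, false) = p := by
        rw [hE' (d, false), hqγ, Equiv.swap_apply_right]
      have e2 : G'.endpoint (d, true) = G.endpoint (d, true) := by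
        rw [hE' (d, true)]
        exact Equiv.swap_apply_of_ne_of_ne a1 a2
      rw [e1, e2, hqγ, H_cq, H_c _ a1 a2]
      exact myXorNotLeft
    | true =>
      have a1 := hnp d false (fun hh => hcd hh.1.symm)
      have a2 := hnq d false (by simp)
      have e1 : G'.endpoint (d, true) = p := by
        rw [hE' (d, true), hqγ, Equiv.swap_apply_right]
      have e2 : G'.endpoint (d, false) = G.endpoint (d, false) := by
        rw [hE' (d, false)]
        exact Equiv.swap_apply_of_ne_of_ne a1 a2
      rw [e1, e2, hqγ, H_cq, H_c _ a1 a2]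
      exact myXorNotRight
  have IL_dc : Interlinked G' d c ↔ ¬ Interlinked G d c := by
    unfold Interlinked
    cases β with
    | false =>
      have a1 := hnp c true (by simp)
      have a2 := hnq c true (fun hh => hcd hh.1)
      have e1 : G'.endpoint (c, false) = nextPos p := by
        rw [hE' (c, false), hpβ, Equiv.swap_apply_left]
      have e2 : G'.endpoint (c, true) = G.endpoint (c, true) := by
        rw [hE' (c, true)]
        exact Equiv.swap_apply_of_ne_of_ne a1 a2
      rw [e1, e2, hpβ, H_dp, H_d _ a1 a2]
      exact myXorNotLeft
    | true =>
      have a1 := hnp c false (by simp)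
      have a2 := hnq c false (fun hh => hcd hh.1)
      have e1 : G'.endpoint (c, true) = nextPos p := by
        rw [hE' (c, true), hpβ, Equiv.swap_apply_left]
      have e2 : G'.endpoint (c, false) = G.endpoint (c, false) := by
        rw [hE' (c, false)]
        exact Equiv.swap_apply_of_ne_of_ne a1 a2
      rw [e1, e2, hpβ, H_dp, H_d _ a1 a2]
      exact myXorNotRight
  -- Odd chord level
  have hO : ∀ e, e ≠ c → e ≠ d → (OddChord G' e ↔ OddChord G e) := by
    intro e h1 h2
    unfold OddChord
    have hfil : (Finset.univ.filter fun f => f ≠ e ∧ Interlinked G' e f)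
        = Finset.univ.filter fun f => f ≠ e ∧ Interlinked G e f := by
      apply Finset.filter_congr
      intro f _
      refine and_congr_right fun _ => ?_
      by_cases h3 : f = c
      · subst h3; exact IL_ec e h1 h2
      · by_cases h4 : f = d
        · subst h4; exact IL_ed e h1 h2
        · exact IL_ff e f h1 h2 h3 h4
    rw [hfil]
  have hdc : d ≠ c := fun hh => hcd hh.symm
  have hOc : OddChord G' c ↔ ¬ OddChord G c := by
    unfold OddChord
    refine odd_toggle _ _ d (fun f hf => ?_) ?_
    · refine and_congr_right fun hfc => ?_
      exact IL_ce f hfc hf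
    · simp [hdc, IL_cd]
  have hOd : OddChord G' d ↔ ¬ OddChord G d := by
    unfold OddChord
    refine odd_toggle _ _ c (fun f hf => ?_) ?_
    · refine and_congr_right fun hfd => ?_
      exact IL_de f hf hfd
    · simp [hcd, IL_dc]
  -- signs
  have hsign : ∀ e, e ≠ c → e ≠ d → G'.sign e = G.sign e := by
    intro e h1 h2; rw [hs]; simp [h1, h2]
  have hsc : G'.sign c = -G.sign c := by rw [hs]; simp
  have hsd : G'.sign d = -G.sign d := by rw [hs]; simp
  -- sum
  rw [oddWrithe_eq, oddWrithe_eq, ← Finset.sum_sub_distrib]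
  have hzero : ∀ e ∈ Finset.univ, e ∉ ({c, d} : Finset (Fin n)) →
      chordVal G e - chordVal G' e = 0 := by
    intro e _ he
    simp only [Finset.mem_insert, Finset.mem_singleton] at he
    push_neg at he
    simp [chordVal, hO e he.1 he.2, hsign e he.1 he.2]
  rw [← Finset.sum_subset (Finset.subset_univ ({c, d} : Finset (Fin n))) hzero,
      Finset.sum_pair hcd]
  have h1 : |chordVal G c - chordVal G' c| ≤ 1 := by
    by_cases hoc : OddChord G c
    · rw [chordVal, chordVal, if_pos hoc, if_neg (fun hh => (hOc.mp hh) hoc)]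
      rcases G.sign_pm c with h | h <;> simp [h]
    · rw [chordVal, chordVal, if_neg hoc, if_pos (hOc.mpr hoc)]
      rw [hsc]
      rcases G.sign_pm c with h | h <;> simp [h]
  have h2 : |chordVal G d - chordVal G' d| ≤ 1 := by
    by_cases hod : OddChord G d
    · rw [chordVal, chordVal, if_pos hod, if_neg (fun hh => (hOd.mp hh) hod)]
      rcases G.sign_pm d with h | h <;> simp [h]
    · rw [chordVal, chordVal, if_neg hod, if_pos (hOd.mpr hod)]
      rw [hsd]
      rcases G.sign_pm d with h | h <;> simp [h]
  calc |chordVal G c - chordVal G' c + (chordVal G d - chordVal G' d)|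
      ≤ |chordVal G c - chordVal G' c| + |chordVal G d - chordVal G' d| := abs_add_le _ _
    _ ≤ 2 := by linarith

lemma signflip_key {n : ℕ} {G G' : GaussDiagram n} (h : SignFlipMove G G') :
    |oddWrithe G - oddWrithe G'| ≤ 2 := by
  obtain ⟨c, hE, hs⟩ := h
  have hO : ∀ e, OddChord G' e ↔ OddChord G e := by
    intro e
    unfold OddChord
    have hfil : (Finset.univ.filter fun f => f ≠ e ∧ Interlinked G' e f)
        = Finset.univ.filter fun f => f ≠ e ∧ Interlinked G e f := by
      apply Finset.filter_congr
      intro f _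
      refine and_congr_right fun _ => ?_
      unfold Interlinked
      rw [hE]
    rw [hfil]
  rw [oddWrithe_eq, oddWrithe_eq, ← Finset.sum_sub_distrib]
  have hzero : ∀ e ∈ Finset.univ, e ∉ ({c} : Finset (Fin n)) →
      chordVal G e - chordVal G' e = 0 := by
    intro e _ he
    simp only [Finset.mem_singleton] at he
    have hsgn : G'.sign e = G.sign e := by
      rw [hs, Function.update_of_ne he]
    simp [chordVal, hO e, hsgn]
  rw [← Finset.sum_subset (Finset.subset_univ ({c} : Finset (Fin n))) hzero,
      Finset.sum_singleton]
  have hsgnc : G'.sign c = -G.sign c := by rw [hs, Function.update_self]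
  by_cases hoc : OddChord G c
  · rw [chordVal, chordVal, if_pos hoc, if_pos ((hO c).mpr hoc), hsgnc]
    rcases G.sign_pm c with h | h <;> simp [h]
  · rw [chordVal, chordVal, if_neg hoc, if_neg (fun hh => hoc ((hO c).mp hh))]
    simp

lemma move_bound {n : ℕ} {G G' : GaussDiagram n} (h : Move G G') :
    |oddWrithe G| ≤ |oddWrithe G'| + 2 := by
  have key : |oddWrithe G - oddWrithe G'| ≤ 2 := by
    rcases h with h | h
    · exact arcshift_key h
    · exact signflip_key h
  have h2 := abs_sub_abs_le_abs_sub (oddWrithe G) (oddWrithe G')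
  linarith

lemma parallel_writhe {n : ℕ} {G : GaussDiagram n} (h : Parallel G) : oddWrithe G = 0 := by
  have hno : ∀ c : Fin n, ¬ OddChord G c := by
    intro c hc
    unfold OddChord at hc
    have hpos : 0 < (Finset.univ.filter fun d => d ≠ c ∧ Interlinked G c d).card :=
      Nat.pos_of_ne_zero (by intro hz; rw [hz] at hc; simp at hc)
    obtain ⟨d, hd⟩ := Finset.card_pos.mp hpos
    rw [Finset.mem_filter] at hd
    exact h c d hd.2.1.symm hd.2.2
  rw [oddWrithe, Finset.filter_eq_empty_iff.mpr (fun x _ => hno x), Finset.sum_empty]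

/-- if `G` can be transformed into a parallel Gauss diagram by a sequence of
`m` moves, each an arc-shift move or a sign-flip move, then `2 m ≥ |J(G)|`; in particular
the minimal number of such moves is at least `|J(G)| / 2`. -/
theorem oddWrithe_lowerbound {n : ℕ} (hn : 1 ≤ n) (G : GaussDiagram n) (m : ℕ)
    (seq : ℕ → GaussDiagram n) (h0 : seq 0 = G)
    (hstep : ∀ i < m, Move (seq i) (seq (i + 1)))
    (hpar : Parallel (seq m)) :
    |oddWrithe G| ≤ 2 * (m : ℤ) := by
  have key : ∀ k i, i + k = m → |oddWrithe (seq i)| ≤ 2 * (k : ℤ) := by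
    intro k
    induction k with
    | zero =>
      intro i hi
      have : i = m := by omega
      subst this
      rw [parallel_writhe hpar]
      simp
    | succ k ih =>
      intro i hi
      have h1 : Move (seq i) (seq (i + 1)) := hstep i (by omega)
      have h2 := ih (i + 1) (by omega)
      have h3 := move_bound h1
      push_cast
      push_cast at h2
      linarith
  have := key m 0 (by omega)
  rw [h0] at this
  simpa using this
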